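/- Let R be a commutative ring that is a ℚ-algebra, equipped with a family (d_i)_{i ∈ Δ} of derivations. Then every minimal prime ideal 𝔭 of R is a Δ-ideal, i.e. d_i(𝔭) ⊆ 𝔭 for all i ∈ Δ. -/

import Mathlib

private lemma cancel_nat {R : Type*} [CommRing R] [Algebra ℚ R] {n : ℕ} (hn : n ≠ 0)
    {y : R} (h : (n : R) * y = 0) : y = 0 := by
  have hu : IsUnit ((n : ℚ)) := isUnit_iff_ne_zero.mpr (by exact_mod_cast hn)
  have hu' : IsUnit ((n : R)) := by
    have := hu.map (algebraMap ℚ R)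
    rwa [map_natCast] at this
  exact hu'.mul_left_cancel (h.trans (mul_zero _).symm)

private lemma step_lemma {R : Type*} [CommRing R] [Algebra ℚ R] (d : Derivation ℤ R R)
    {t x : R} {m j : ℕ} (h : t * x ^ (m + 1) * (d x) ^ (j + 1) = 0) :
    t ^ 2 * x ^ m * (d x) ^ (j + 3) = 0 := by
  have h1 : d (t * x ^ (m + 1) * (d x) ^ (j + 1)) =
      d t * x ^ (m + 1) * (d x) ^ (j + 1)
        + ((m : R) + 1) * t * x ^ m * (d x) ^ (j + 2)
        + ((j : R) + 1) * t * x ^ (m + 1) * (d x) ^ j * d (d x) := by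
    simp [Derivation.leibniz, Derivation.leibniz_pow, smul_eq_mul]
    ring
  have h2 : d (t * x ^ (m + 1) * (d x) ^ (j + 1)) = 0 := by rw [h, map_zero]
  have h3 := h1.symm.trans h2
  have hc : ((m : R) + 1) * (t ^ 2 * x ^ m * (d x) ^ (j + 3)) = 0 := by
    linear_combination (t * d x) * h3 - (d t * d x) * h - ((j : R) + 1) * t * d (d x) * h
  have : ((m + 1 : ℕ) : R) * (t ^ 2 * x ^ m * (d x) ^ (j + 3)) = 0 := by push_cast; exact hc
  exact cancel_nat (Nat.succ_ne_zero m) this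

private lemma desc_lemma {R : Type*} [CommRing R] [Algebra ℚ R] (d : Derivation ℤ R R)
    {p : Ideal R} [p.IsPrime] (x : R) :
    ∀ (m j : ℕ) (t : R), t ∉ p → t * x ^ m * (d x) ^ (j + 1) = 0 →
      ∃ t', t' ∉ p ∧ t' * (d x) ^ (2 * m + j + 1) = 0 := by
  intro m
  induction m with
  | zero => intro j t ht h; exact ⟨t, ht, by simpa using h⟩
  | succ m ih =>
    intro j t ht h
    have h' := step_lemma d h
    have ht2 : t ^ 2 ∉ p := fun hc => ht (‹p.IsPrime›.mem_of_pow_mem 2 hc)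
    obtain ⟨t', ht', h''⟩ := ih (j + 2) (t ^ 2) ht2 h'
    exact ⟨t', ht', by convert h'' using 3; ring⟩

theorem stmt_7 {R Δ : Type*} [CommRing R] [Algebra ℚ R]
    (d : Δ → Derivation ℤ R R) (p : Ideal R) (hp : p ∈ minimalPrimes R) :
    ∀ i, ∀ x ∈ p, d i x ∈ p := by
  intro i x hx
  have hpp : p.IsPrime := hp.1.1
  -- x is nilpotent in the localization at p
  have hnil : IsNilpotent (algebraMap R (Localization p.primeCompl) x) :=
    haveI := Ring.KrullDimLE.of_isLocalization p hp (Localization p.primeCompl)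
    Ring.KrullDimLE.isNilpotent_iff_mem_maximalIdeal.mpr
      ((IsLocalization.AtPrime.to_map_mem_maximal_iff _ p x).mpr hx)
  obtain ⟨n, hn⟩ := hnil
  rw [← map_pow] at hn
  obtain ⟨s, hs⟩ := (IsLocalization.map_eq_zero_iff p.primeCompl
    (Localization p.primeCompl) (x ^ n)).mp hn
  -- s ∈ p.primeCompl, s * x ^ n = 0
  have hsp : (s : R) ∉ p := s.2
  rcases n with _ | n
  · exfalso
    apply hsp
    have : (s : R) = 0 := by simpa using hs
    rw [this]; exact p.zero_mem
  -- base step: s ^ 2 * x ^ n * (d i x) ^ 1 = 0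
  have h0 : (s : R) * x ^ (n + 1) = 0 := hs
  set D := d i with hD
  have h1 : D ((s : R) * x ^ (n + 1)) = 0 := by rw [h0, map_zero]
  have h2 : D ((s : R) * x ^ (n + 1)) =
      D (s : R) * x ^ (n + 1) + ((n : R) + 1) * (s : R) * x ^ n * D x := by
    simp [Derivation.leibniz, Derivation.leibniz_pow, smul_eq_mul]
    ring
  have h3 := h2.symm.trans h1
  have hc : ((n : R) + 1) * ((s : R) ^ 2 * x ^ n * (D x) ^ 1) = 0 := by
    linear_combination (s : R) * h3 - D (s : R) * h0
  have hc' : ((n + 1 : ℕ) : R) * ((s : R) ^ 2 * x ^ n * (D x) ^ 1) = 0 := by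
    push_cast; exact hc
  have hbase : (s : R) ^ 2 * x ^ n * (D x) ^ (0 + 1) = 0 :=
    cancel_nat (Nat.succ_ne_zero n) hc'
  have hs2 : (s : R) ^ 2 ∉ p := fun hcon => hsp (hpp.mem_of_pow_mem 2 hcon)
  obtain ⟨t', ht', hfin⟩ := desc_lemma D x n 0 ((s : R) ^ 2) hs2 hbase
  have hmem : t' * (D x) ^ (2 * n + 0 + 1) ∈ p := by rw [hfin]; exact p.zero_mem
  rcases hpp.mem_or_mem hmem with h | h
  · exact absurd h ht'
  · exact hpp.mem_of_pow_mem _ h
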